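/- Recurrence via Cauchy numbers, second kind: for n ≥ 1, D̂_n(x|a_1,…,a_r) = (x + a_1+⋯+a_r)·D̂_{n-1}(x−1|a_1,…,a_r) + (r/n)∑_{l=0}^n C(n,l) c_l D̂_{n-l}(x−1|a_1,…,a_r) − (1/n)∑_{j=1}^r ∑_{l=0}^n C(n,l) a_j c_l D̂_{n-l}(x−1|a_1,…,a_r,a_j). -/

import Mathlib

open Finset PowerSeries

/-- Exponential generating function: `∑ f n * t^n / n!`. -/
noncomputable def egf (f : ℕ → ℚ) : PowerSeries ℚ :=
  PowerSeries.mk fun n => f n / n.factorial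

/-- The formal power series `log(1+t) = ∑_{m≥1} (-1)^{m-1} t^m / m`. -/
noncomputable def log1p : PowerSeries ℚ :=
  PowerSeries.mk fun n => if n = 0 then 0 else (-1) ^ (n - 1) / n

/-- Formal exponential composition: for `f` with zero constant term this is
`exp(f) = ∑_k f^k / k!` (the sum in each coefficient is finite). -/
noncomputable def expPS (f : PowerSeries ℚ) : PowerSeries ℚ :=
  PowerSeries.mk fun n =>
    ∑ k ∈ Finset.range (n + 1), (PowerSeries.coeff n (f ^ k)) / k.factorial

/-- `(1+t)^a := exp(a · log(1+t))` as a formal power series. -/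
noncomputable def onePow (a : ℚ) : PowerSeries ℚ := expPS (PowerSeries.C a * log1p)

/-- `e^{a t} = ∑ a^n t^n / n!`. -/
noncomputable def expAt (a : ℚ) : PowerSeries ℚ :=
  PowerSeries.mk fun n => a ^ n / n.factorial

/-- Falling factorial `(x)_n = x(x-1)⋯(x-n+1)`. -/
noncomputable def ffall (x : ℚ) (n : ℕ) : ℚ := ∏ i ∈ Finset.range n, (x - i)

-- abbreviation for derivative
local notation "dd" => PowerSeries.derivative ℚ

lemma dmul (u v : PowerSeries ℚ) : dd (u * v) = u * dd v + v * dd u := by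
  rw [Derivation.leibniz, smul_eq_mul, smul_eq_mul]

lemma constCoeff_log1p : constantCoeff log1p = 0 := by
  rw [← coeff_zero_eq_constantCoeff_apply]; simp [log1p]

lemma coeff_one_log1p : coeff 1 log1p = 1 := by simp [log1p]

lemma coeff_pow_eq_zero {f : PowerSeries ℚ} (hf : constantCoeff f = 0)
    {m k : ℕ} (h : m < k) : coeff m (f ^ k) = 0 := by
  have hX : (X : PowerSeries ℚ) ∣ f := X_dvd_iff.mpr hf
  have : (X : PowerSeries ℚ) ^ k ∣ f ^ k := pow_dvd_pow_of_dvd hX k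
  exact (X_pow_dvd_iff.mp this) m h

/-- partial sum of exponential -/
noncomputable def expS (f : PowerSeries ℚ) (N : ℕ) : PowerSeries ℚ :=
  ∑ k ∈ Finset.range N, ((k.factorial : ℚ)⁻¹) • f ^ k

lemma coeff_expS (f : PowerSeries ℚ) (N n : ℕ) :
    coeff n (expS f N) = ∑ k ∈ Finset.range N, coeff n (f ^ k) / k.factorial := by
  simp [expS, div_eq_inv_mul, map_sum]

lemma coeff_expPS_eq_expS {f : PowerSeries ℚ} (hf : constantCoeff f = 0)
    {n N : ℕ} (h : n < N) : coeff n (expPS f) = coeff n (expS f N) := by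
  rw [coeff_expS, expPS, coeff_mk]
  apply Finset.sum_subset
  · intro k hk
    simp only [Finset.mem_range] at hk ⊢; omega
  · intro k hk hk'
    simp only [Finset.mem_range, not_lt] at hk'
    rw [coeff_pow_eq_zero hf (by omega), zero_div]

lemma coeff_mul_congr (u g h : PowerSeries ℚ) (n : ℕ)
    (H : ∀ m ≤ n, coeff m g = coeff m h) :
    coeff n (u * g) = coeff n (u * h) := by
  rw [coeff_mul, coeff_mul]
  refine Finset.sum_congr rfl fun p hp => ?_
  rw [Finset.HasAntidiagonal.mem_antidiagonal] at hp
  rw [H p.2 (by omega)]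

lemma derivative_expS_succ (f : PowerSeries ℚ) (N : ℕ) :
    dd (expS f (N + 1)) = dd f * expS f N := by
  have h0 : dd ((((0:ℕ).factorial : ℚ))⁻¹ • f ^ 0) = 0 := by
    simp
  rw [expS, map_sum, Finset.sum_range_succ', h0, add_zero, expS, Finset.mul_sum]
  refine Finset.sum_congr rfl fun k _ => ?_
  rw [Derivation.map_smul, Derivation.leibniz_pow]
  simp only [Nat.succ_sub_one]
  rw [← Nat.cast_smul_eq_nsmul ℚ, smul_smul, smul_eq_mul]
  rw [show ((k + 1).factorial : ℚ)⁻¹ * ((k + 1 : ℕ) : ℚ) = (k.factorial : ℚ)⁻¹ from by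
    rw [Nat.factorial_succ]; push_cast; rw [mul_inv]; field_simp]
  rw [PowerSeries.smul_eq_C_mul, PowerSeries.smul_eq_C_mul]; ring

lemma derivative_expPS {f : PowerSeries ℚ} (hf : constantCoeff f = 0) :
    dd (expPS f) = dd f * expPS f := by
  ext n
  rw [coeff_derivative, coeff_expPS_eq_expS hf (show n + 1 < n + 2 by omega),
    ← coeff_derivative, derivative_expS_succ]
  refine coeff_mul_congr _ _ _ _ fun m hm => ?_
  rw [← coeff_expPS_eq_expS hf (show m < n + 1 by omega)]


lemma constCoeff_expPS (f : PowerSeries ℚ) : constantCoeff (expPS f) = 1 := by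
  rw [← coeff_zero_eq_constantCoeff_apply, expPS, coeff_mk]
  simp

lemma coeff_one_expPS (f : PowerSeries ℚ) : coeff 1 (expPS f) = coeff 1 f := by
  rw [expPS, coeff_mk, Finset.sum_range_succ, Finset.sum_range_one]
  simp

lemma ode_unique {u y z : PowerSeries ℚ} (hy : dd y = u * y) (hz : dd z = u * z)
    (h0 : constantCoeff y = constantCoeff z) : y = z := by
  ext n
  induction n using Nat.strong_induction_on with
  | _ n ih =>
    match n with
    | 0 => simpa [coeff_zero_eq_constantCoeff_apply] using h0
    | Nat.succ m =>
      have h1 : coeff m (dd y) = coeff m (dd z) := by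
        rw [hy, hz, coeff_mul, coeff_mul]
        refine Finset.sum_congr rfl fun p hp => ?_
        rw [Finset.HasAntidiagonal.mem_antidiagonal] at hp
        rw [ih p.2 (by omega)]
      rw [coeff_derivative, coeff_derivative] at h1
      exact mul_right_cancel₀ (by positivity : ((m:ℚ)+1) ≠ 0) h1

lemma expPS_mul {f g : PowerSeries ℚ} (hf : constantCoeff f = 0)
    (hg : constantCoeff g = 0) : expPS (f + g) = expPS f * expPS g := by
  refine ode_unique (u := dd f + dd g) ?_ ?_ ?_
  · rw [derivative_expPS (by rw [map_add, hf, hg, add_zero]), map_add]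
  · rw [dmul, derivative_expPS hf, derivative_expPS hg]; ring
  · rw [constCoeff_expPS, map_mul, constCoeff_expPS, constCoeff_expPS, mul_one]

lemma constCoeff_ClogMul (a : ℚ) : constantCoeff (C a * log1p) = 0 := by
  rw [map_mul, constCoeff_log1p, mul_zero]

lemma onePow_mul_onePow (a b : ℚ) : onePow a * onePow b = onePow (a + b) := by
  rw [onePow, onePow, onePow, ← expPS_mul (constCoeff_ClogMul a) (constCoeff_ClogMul b),
    ← add_mul, ← map_add]

lemma constCoeff_onePow (a : ℚ) : constantCoeff (onePow a) = 1 := constCoeff_expPS _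

lemma coeff_one_onePow (a : ℚ) : coeff 1 (onePow a) = a := by
  rw [onePow, coeff_one_expPS]
  rw [coeff_C_mul, coeff_one_log1p, mul_one]

lemma derivative_log1p : dd log1p = PowerSeries.mk fun n => (-1) ^ n := by
  ext n
  rw [coeff_derivative, log1p, coeff_mk, coeff_mk]
  simp only [Nat.add_sub_cancel, Nat.succ_ne_zero, if_false]
  rw [show ((n+1 : ℕ) : ℚ) = (n : ℚ) + 1 from by push_cast; ring,
    div_mul_cancel₀ _ (by positivity : ((n:ℚ)+1) ≠ 0)]

lemma derivative_log1p_mul : dd log1p * (1 + X) = 1 := by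
  rw [derivative_log1p]
  ext n
  rw [mul_add, mul_one, map_add, coeff_mk]
  match n with
  | 0 =>
    simp [coeff_zero_eq_constantCoeff_apply, constantCoeff_X]
  | Nat.succ m =>
    rw [show ((PowerSeries.mk fun n => ((-1:ℚ)) ^ n) * X) = X * (PowerSeries.mk fun n => ((-1:ℚ)) ^ n) from mul_comm _ _]
    rw [coeff_succ_X_mul, coeff_mk, coeff_one]
    simp only [Nat.succ_ne_zero, if_false]
    rw [pow_succ]; ring

lemma derivative_onePow (a : ℚ) : dd (onePow a) = C a * dd log1p * onePow a := by
  rw [onePow, derivative_expPS (constCoeff_ClogMul a), dmul, derivative_C, mul_zero, add_zero]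

lemma onePow_one : onePow 1 = 1 + X := by
  refine ode_unique (u := dd log1p) ?_ ?_ ?_
  · rw [derivative_onePow, map_one, one_mul]
  · rw [map_add, Derivation.map_one_eq_zero, zero_add, derivative_X]
    exact derivative_log1p_mul.symm
  · rw [constCoeff_onePow, map_add, map_one, constantCoeff_X, add_zero]

lemma onePow_succ (x : ℚ) : onePow x = onePow (x - 1) * (1 + X) := by
  have h : x - 1 + 1 = x := by ring
  rw [← onePow_one, onePow_mul_onePow, h]

lemma log1p_ne_zero : log1p ≠ 0 := fun h => by
  have := coeff_one_log1p; rw [h, map_zero] at this; exact one_ne_zero this.symm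

lemma onePow_sub_one_ne_zero {a : ℚ} (ha : a ≠ 0) : onePow a - 1 ≠ 0 := fun h => by
  have : coeff 1 (onePow a - 1) = a := by
    rw [map_sub, coeff_one_onePow, coeff_one, if_neg one_ne_zero, sub_zero]
  rw [h, map_zero] at this; exact ha this.symm

lemma derivative_finset_prod {ι : Type*} [DecidableEq ι] (s : Finset ι) (f : ι → PowerSeries ℚ) :
    dd (∏ i ∈ s, f i) = ∑ j ∈ s, dd (f j) * ∏ i ∈ s.erase j, f i := by
  induction s using Finset.induction with
  | empty => simp
  | @insert b s hb ih =>
    rw [Finset.prod_insert hb, dmul, ih, Finset.sum_insert hb, Finset.erase_insert hb,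
      Finset.mul_sum, add_comm]
    congr 1
    · exact mul_comm _ _
    · refine Finset.sum_congr rfl fun j hj => ?_
      rw [Finset.erase_insert_of_ne (ne_of_mem_of_not_mem hj hb).symm,
        Finset.prod_insert (fun h => hb (Finset.mem_of_mem_erase h))]
      ring

lemma derivative_pow_mul_self (r : ℕ) :
    dd (log1p ^ r) * log1p = C (r : ℚ) * (log1p ^ r * dd log1p) := by
  match r with
  | 0 => simp
  | Nat.succ s =>
    rw [Derivation.leibniz_pow, Nat.succ_sub_one]
    rw [← Nat.cast_smul_eq_nsmul ℚ, PowerSeries.smul_eq_C_mul, smul_eq_mul]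
    rw [show ((s+1 : ℕ) : ℚ) = ((s:ℚ)+1) from by push_cast; ring]
    rw [pow_succ]
    ring

lemma coeff_egf (f : ℕ → ℚ) (k : ℕ) : coeff k (egf f) = f k / k.factorial := by
  simp [egf]

theorem stmt13 (r : ℕ) (a : Fin r → ℚ) (ha : ∀ j, a j ≠ 0) (Dh : ℕ → ℚ → ℚ)
    (hDh : ∀ x : ℚ, (∏ j, (onePow (a j) - 1)) * egf (fun n => Dh n x) = (∏ j, onePow (a j)) * log1p ^ r * onePow x)
    (E : Fin r → ℕ → ℚ → ℚ)
    (hE : ∀ (j : Fin r) (x : ℚ),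
      ((onePow (a j) - 1) * ∏ i, (onePow (a i) - 1)) * egf (fun n => E j n x) =
        (onePow (a j) * ∏ i, onePow (a i)) * log1p ^ (r + 1) * onePow x)
    (c : ℕ → ℚ) (hc : log1p * egf c = PowerSeries.X)
    (n : ℕ) (hn : 1 ≤ n) (x : ℚ) :
    Dh n x = (x + ∑ j, a j) * Dh (n - 1) (x - 1)
      + (r : ℚ) / n * ∑ l ∈ Finset.range (n + 1), (n.choose l : ℚ) * c l * Dh (n - l) (x - 1)
      - (1 / n) * ∑ j, ∑ l ∈ Finset.range (n + 1),
          (n.choose l : ℚ) * a j * c l * E j (n - l) (x - 1) := by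
  have hPne : (∏ j, (onePow (a j) - 1)) ≠ 0 :=
    Finset.prod_ne_zero_iff.mpr fun j _ => onePow_sub_one_ne_zero (ha j)
  -- Sⱼ Eⱼ = Wⱼ L H
  have hSE : ∀ j, (onePow (a j) - 1) * egf (fun n => E j n (x-1)) =
      onePow (a j) * log1p * egf (fun n => Dh n (x-1)) := by
    intro j
    apply mul_left_cancel₀ hPne
    calc (∏ j, (onePow (a j) - 1)) * ((onePow (a j) - 1) * egf (fun n => E j n (x-1)))
        = ((onePow (a j) - 1) * ∏ i, (onePow (a i) - 1)) * egf (fun n => E j n (x-1)) := by ring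
      _ = (onePow (a j) * ∏ i, onePow (a i)) * log1p ^ (r + 1) * onePow (x-1) := hE j (x-1)
      _ = onePow (a j) * log1p * ((∏ i, onePow (a i)) * log1p ^ r * onePow (x-1)) := by ring
      _ = onePow (a j) * log1p * ((∏ j, (onePow (a j) - 1)) * egf (fun n => Dh n (x-1))) := by
          rw [hDh (x-1)]
      _ = (∏ j, (onePow (a j) - 1)) * (onePow (a j) * log1p * egf (fun n => Dh n (x-1))) := by
          ring
  -- G = (1+X) H
  have hGeq : egf (fun n => Dh n x) = (1 + X) * egf (fun n => Dh n (x-1)) := by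
    apply mul_left_cancel₀ hPne
    calc (∏ j, (onePow (a j) - 1)) * egf (fun n => Dh n x)
        = (∏ j, onePow (a j)) * log1p ^ r * onePow x := hDh x
      _ = ((∏ j, onePow (a j)) * log1p ^ r * onePow (x-1)) * (1 + X) := by
          rw [onePow_succ x]; ring
      _ = ((∏ j, (onePow (a j) - 1)) * egf (fun n => Dh n (x-1))) * (1 + X) := by
          rw [hDh (x-1)]
      _ = (∏ j, (onePow (a j) - 1)) * ((1 + X) * egf (fun n => Dh n (x-1))) := by ring
  -- derivative of the main generating identity
  have hD0 : dd ((∏ j, (onePow (a j) - 1)) * egf (fun n => Dh n x)) =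
      dd ((∏ j, onePow (a j)) * log1p ^ r * onePow x) := by rw [hDh x]
  rw [dmul, dmul, dmul] at hD0
  -- derivative of P
  have hdP : dd (∏ j, (onePow (a j) - 1)) = dd log1p *
      (∑ j, C (a j) * onePow (a j) * ∏ i ∈ Finset.univ.erase j, (onePow (a i) - 1)) := by
    rw [derivative_finset_prod, Finset.mul_sum]
    refine Finset.sum_congr rfl fun j _ => ?_
    rw [map_sub, derivative_onePow, Derivation.map_one_eq_zero, sub_zero]
    ring
  -- derivative of Q
  have hdQ : dd (∏ j, onePow (a j)) = C (∑ j, a j) * (dd log1p * ∏ j, onePow (a j)) := by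
    rw [derivative_finset_prod]
    rw [show C (∑ j, a j) = ∑ j, C (a j) from map_sum (C : ℚ →+* PowerSeries ℚ) a Finset.univ,
      Finset.sum_mul]
    refine Finset.sum_congr rfl fun j _ => ?_
    rw [derivative_onePow,
      ← Finset.mul_prod_erase Finset.univ (fun i => onePow (a i)) (Finset.mem_univ j)]
    ring
  -- the sum identity E11
  have hS : log1p * (∏ j, (onePow (a j) - 1)) *
      (∑ j, C (a j) * (egf c * egf (fun n => E j n (x-1)))) =
      egf c * log1p * log1p * egf (fun n => Dh n (x-1)) *
      (∑ j, C (a j) * onePow (a j) * ∏ i ∈ Finset.univ.erase j, (onePow (a i) - 1)) := by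
    rw [Finset.mul_sum, Finset.mul_sum]
    refine Finset.sum_congr rfl fun j _ => ?_
    have hP : (onePow (a j) - 1) * ∏ i ∈ Finset.univ.erase j, (onePow (a i) - 1) =
        ∏ i, (onePow (a i) - 1) :=
      Finset.mul_prod_erase Finset.univ (fun i => onePow (a i) - 1) (Finset.mem_univ j)
    linear_combination (C (a j) * (egf c) * log1p * egf (fun n => E j n (x-1))) * hP.symm +
      (C (a j) * (egf c) * log1p *
        (∏ i ∈ Finset.univ.erase j, (onePow (a i) - 1))) * hSE j
  -- master identity
  have hM : log1p * (∏ j, (onePow (a j) - 1)) * (X * dd (egf fun n => Dh n x)) =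
      log1p * (∏ j, (onePow (a j) - 1)) *
        ((C x + C (∑ j, a j)) * (X * egf fun n => Dh n (x-1)) +
         C ((r : ℕ) : ℚ) * (egf c * egf fun n => Dh n (x-1)) -
         ∑ j, C (a j) * (egf c * egf (fun n => E j n (x-1)))) := by
    linear_combination (X * log1p) * hD0
      - (X * log1p * egf (fun n => Dh n x)) * hdP
      + (X * log1p * (∏ j, onePow (a j)) * log1p ^ r) * derivative_onePow x
      + (X * log1p * onePow x * log1p ^ r) * hdQ
      + (X * onePow x * (∏ j, onePow (a j))) * derivative_pow_mul_self r
      - (X * log1p * dd log1p *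
          (∑ j, C (a j) * onePow (a j) * ∏ i ∈ Finset.univ.erase j, (onePow (a i) - 1))) * hGeq
      + (-(X * log1p *
            (∑ j, C (a j) * onePow (a j) * ∏ i ∈ Finset.univ.erase j, (onePow (a i) - 1)) *
            egf (fun n => Dh n (x-1)))
         + (C x + C (∑ j, a j)) * X * log1p * (∏ j, onePow (a j)) * log1p ^ r * onePow (x-1)
         + C ((r : ℕ) : ℚ) * X * (∏ j, onePow (a j)) * log1p ^ r * onePow (x-1)) *
          derivative_log1p_mul
      + (log1p * (∑ j, C (a j) * onePow (a j) * ∏ i ∈ Finset.univ.erase j, (onePow (a i) - 1)) *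
            egf (fun n => Dh n (x-1))
         - C ((r : ℕ) : ℚ) * (∏ j, (onePow (a j) - 1)) * egf (fun n => Dh n (x-1))) * hc
      + hS
      + ((C x + C (∑ j, a j)) * X * log1p * dd log1p * (∏ j, onePow (a j)) * log1p ^ r
         + C ((r : ℕ) : ℚ) * X * (∏ j, onePow (a j)) * log1p ^ r * dd log1p) * onePow_succ x
      - ((C x + C (∑ j, a j)) * X * log1p + C ((r : ℕ) : ℚ) * X) * hDh (x-1)
  have hStar := mul_left_cancel₀ (mul_ne_zero log1p_ne_zero hPne) hM
  obtain ⟨m, rfl⟩ : ∃ m, n = m + 1 := ⟨n - 1, by omega⟩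
  rw [add_mul] at hStar
  have hco := congrArg (coeff (m+1)) hStar
  rw [coeff_succ_X_mul, coeff_derivative] at hco
  simp only [map_sub, map_add] at hco
  simp only [coeff_C_mul] at hco
  simp only [map_sum] at hco
  simp only [coeff_C_mul] at hco
  simp only [coeff_succ_X_mul] at hco
  simp only [coeff_mul, coeff_egf, Finset.Nat.sum_antidiagonal_eq_sum_range_succ_mk,
    Nat.succ_eq_add_one] at hco
  clear hM hStar hD0 hdP hdQ hS hSE hGeq hPne
  -- scalar bookkeeping
  have hfne : ∀ k : ℕ, ((k.factorial : ℚ)) ≠ 0 := fun k => Nat.cast_ne_zero.mpr k.factorial_ne_zero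
  have hm0 := hfne m
  have hm1 : ((m:ℚ)+1) ≠ 0 := by positivity
  have hs1 : (m.factorial : ℚ) * ∑ l ∈ Finset.range (m+1+1),
        c l / l.factorial * (Dh (m+1-l) (x-1) / (m+1-l).factorial) =
      (1/((m:ℚ)+1)) * ∑ l ∈ Finset.range (m+1+1),
        ((m+1).choose l : ℚ) * c l * Dh (m+1-l) (x-1) := by
    rw [Finset.mul_sum, Finset.mul_sum]
    refine Finset.sum_congr rfl fun l hl => ?_
    have hl' : l ≤ m+1 := by simp only [Finset.mem_range] at hl; omega
    have h1 := hfne l; have h2 := hfne (m+1-l)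
    rw [Nat.cast_choose ℚ hl', Nat.factorial_succ]
    push_cast
    field_simp
  have hs2 : ∀ j, (m.factorial : ℚ) * ∑ l ∈ Finset.range (m+1+1),
        c l / l.factorial * (E j (m+1-l) (x-1) / (m+1-l).factorial) =
      (1/((m:ℚ)+1)) * ∑ l ∈ Finset.range (m+1+1),
        ((m+1).choose l : ℚ) * c l * E j (m+1-l) (x-1) := by
    intro j
    rw [Finset.mul_sum, Finset.mul_sum]
    refine Finset.sum_congr rfl fun l hl => ?_
    have hl' : l ≤ m+1 := by simp only [Finset.mem_range] at hl; omega
    have h1 := hfne l; have h2 := hfne (m+1-l)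
    rw [Nat.cast_choose ℚ hl', Nat.factorial_succ]
    push_cast
    field_simp
  have hs2' : (m.factorial : ℚ) * ∑ j, a j * ∑ l ∈ Finset.range (m+1+1),
        c l / l.factorial * (E j (m+1-l) (x-1) / (m+1-l).factorial) =
      (1/((m:ℚ)+1)) * ∑ j, ∑ l ∈ Finset.range (m+1+1),
        ((m+1).choose l : ℚ) * a j * c l * E j (m+1-l) (x-1) := by
    rw [Finset.mul_sum, Finset.mul_sum]
    refine Finset.sum_congr rfl fun j _ => ?_
    rw [show (∑ l ∈ Finset.range (m+1+1), ((m+1).choose l : ℚ) * a j * c l * E j (m+1-l) (x-1))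
        = a j * ∑ l ∈ Finset.range (m+1+1), ((m+1).choose l : ℚ) * c l * E j (m+1-l) (x-1) from by
      rw [Finset.mul_sum]; exact Finset.sum_congr rfl fun l _ => by ring]
    linear_combination (a j) * hs2 j
  have hmfac : (m.factorial : ℚ) * (Dh m (x-1) / (m.factorial : ℚ)) = Dh m (x-1) := by
    field_simp
  have hDhval : Dh (m+1) x =
      (m.factorial : ℚ) * (Dh (m+1) x / ((m+1).factorial : ℚ) * ((m:ℚ)+1)) := by
    rw [Nat.factorial_succ]; push_cast; field_simp
  simp only [Nat.add_sub_cancel]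
  push_cast
  rw [hDhval, hco]
  linear_combination (x + ∑ j, a j) * hmfac + (r:ℚ) * hs1 - hs2'
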